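/- Let ι and I be finite types and j₀ : ι a designated element. Suppose (R, s, m, S) and (R', s', m', S') satisfy: R, R' : Matrix ι I ℝ with R ⬝ Rᵀ and R' ⬝ R'ᵀ invertible; s, s' : ι → ℝ with s i ≠ 0 and s' i ≠ 0 for all i; m, m' : ι → ℝ injective; S, S' : Matrix ι ι ℝ invertible with S i j₀ = 1 and S' i j₀ = 1 for all i. If Rᵀ ⬝ diagonal s ⬝ S = R'ᵀ ⬝ diagonal s' ⬝ S' and Rᵀ ⬝ diagonal s ⬝ diagonal m ⬝ S = R'ᵀ ⬝ diagonal s' ⬝ diagonal m' ⬝ S', then there exists a bijection σ : ι ≃ ι such that m' i = m (σ i) for all i and S' i j = S (σ i) j for all i, j. -/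

import Mathlib

open Matrix

/-- **Identifiability content of the paper's Lemma A.2** (variant of Kuroki–Pearl's Theorem 1):
if two latent-variable parameterizations induce the same observable matrices
`A = Rᵀ ⬝ diagonal s ⬝ S` and `B = Rᵀ ⬝ diagonal s ⬝ diagonal m ⬝ S`, then the mixture
parameters `(m, S)` agree up to a permutation of the latent categories. -/
theorem stmt_12 {ι I : Type*} [Fintype ι] [Fintype I] [DecidableEq ι]
    (j₀ : ι)
    (R R' : Matrix ι I ℝ)
    (hR : IsUnit (R * Rᵀ).det) (hR' : IsUnit (R' * R'ᵀ).det)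
    (s s' : ι → ℝ) (hs : ∀ i, s i ≠ 0) (hs' : ∀ i, s' i ≠ 0)
    (m m' : ι → ℝ) (hm : Function.Injective m) (hm' : Function.Injective m')
    (S S' : Matrix ι ι ℝ) (hS : IsUnit S.det) (hS' : IsUnit S'.det)
    (hSj₀ : ∀ i, S i j₀ = 1) (hS'j₀ : ∀ i, S' i j₀ = 1)
    (hAB1 : Rᵀ * diagonal s * S = R'ᵀ * diagonal s' * S')
    (hAB2 : Rᵀ * diagonal s * diagonal m * S = R'ᵀ * diagonal s' * diagonal m' * S') :
    ∃ σ : ι ≃ ι, (∀ i, m' i = m (σ i)) ∧ ∀ i j, S' i j = S (σ i) j := by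
  classical
  set X := diagonal s * S with hX
  set X' := diagonal s' * S' with hX'
  have hXdet : IsUnit X.det := by
    rw [hX, det_mul, det_diagonal]
    exact (isUnit_iff_ne_zero.mpr (Finset.prod_ne_zero_iff.mpr fun i _ => hs i)).mul hS
  have hX'det : IsUnit X'.det := by
    rw [hX', det_mul, det_diagonal]
    exact (isUnit_iff_ne_zero.mpr (Finset.prod_ne_zero_iff.mpr fun i _ => hs' i)).mul hS'
  set P := X * X'⁻¹ with hP
  have hPX' : P * X' = X := by
    rw [hP, mul_assoc, nonsing_inv_mul _ hX'det, mul_one]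
  have hPdet : IsUnit P.det := by
    rw [hP, det_mul, det_nonsing_inv]
    exact hXdet.mul (isUnit_ringInverse.mpr hX'det)
  have h1 : Rᵀ * X = R'ᵀ * X' := by
    rw [hX, hX', ← Matrix.mul_assoc, ← Matrix.mul_assoc]; exact hAB1
  have e : diagonal m * X = diagonal s * diagonal m * S := by
    rw [hX, ← mul_assoc, diagonal_mul_diagonal,
      show (fun i => m i * s i) = fun i => s i * m i from funext fun i => mul_comm _ _,
      ← diagonal_mul_diagonal]
  have e' : diagonal m' * X' = diagonal s' * diagonal m' * S' := by
    rw [hX', ← mul_assoc, diagonal_mul_diagonal,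
      show (fun i => m' i * s' i) = fun i => s' i * m' i from funext fun i => mul_comm _ _,
      ← diagonal_mul_diagonal]
  have h2 : Rᵀ * (diagonal m * X) = R'ᵀ * (diagonal m' * X') := by
    rw [e, e']
    simp only [← Matrix.mul_assoc]
    exact hAB2
  have hG : (R * Rᵀ)⁻¹ * R * Rᵀ = 1 := by
    rw [Matrix.mul_assoc, nonsing_inv_mul _ hR]
  have cancel : ∀ M N : Matrix ι ι ℝ, Rᵀ * M = Rᵀ * N → M = N := by
    intro M N h
    have h' : ((R * Rᵀ)⁻¹ * R) * (Rᵀ * M) = ((R * Rᵀ)⁻¹ * R) * (Rᵀ * N) := by rw [h]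
    rwa [← Matrix.mul_assoc, ← Matrix.mul_assoc, hG, one_mul, one_mul] at h'
  have hRP : Rᵀ * P = R'ᵀ := by
    rw [hP, ← Matrix.mul_assoc, h1, Matrix.mul_assoc, mul_nonsing_inv _ hX'det, Matrix.mul_one]
  have key : diagonal m * X = P * (diagonal m' * X') :=
    cancel _ _ (h2.trans (by rw [← hRP, Matrix.mul_assoc Rᵀ P _]))
  have h3 : diagonal m * P * X' = P * diagonal m' * X' := by
    rw [mul_assoc, hPX', key, ← mul_assoc]
  have conj : diagonal m * P = P * diagonal m' := by
    calc diagonal m * P = diagonal m * P * X' * X'⁻¹ := by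
          rw [mul_assoc, mul_nonsing_inv _ hX'det, mul_one]
      _ = P * diagonal m' * X' * X'⁻¹ := by rw [h3]
      _ = P * diagonal m' := by rw [mul_assoc, mul_nonsing_inv _ hX'det, mul_one]
  have entry : ∀ i j, m i * P i j = P i j * m' j := by
    intro i j
    have := congrFun (congrFun conj i) j
    simpa [diagonal_mul, mul_diagonal] using this
  have hrel : ∀ i j, P i j ≠ 0 → m i = m' j := by
    intro i j h
    have := entry i j
    rw [mul_comm (P i j) (m' j)] at this
    exact mul_right_cancel₀ h this
  have colnz : ∀ j, ∃ i, P i j ≠ 0 := by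
    intro j
    by_contra h
    push_neg at h
    have h0 : (P⁻¹ * P) j j = 0 := by simp [mul_apply, h]
    rw [nonsing_inv_mul _ hPdet] at h0
    simp at h0
  set f : ι → ι := fun j => (colnz j).choose with hf
  have hfP : ∀ j, P (f j) j ≠ 0 := fun j => (colnz j).choose_spec
  have hmf : ∀ j, m (f j) = m' j := fun j => hrel _ _ (hfP j)
  have finj : Function.Injective f := by
    intro a b hab
    apply hm'
    rw [← hmf a, ← hmf b, hab]
  have fbij : Function.Bijective f := Finite.injective_iff_bijective.mp finj
  refine ⟨Equiv.ofBijective f fbij, fun i => (hmf i).symm, ?_⟩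
  have hrow : ∀ i k, X (f i) k = P (f i) i * X' i k := by
    intro i k
    have hx : X (f i) k = (P * X') (f i) k := by rw [hPX']
    rw [hx, mul_apply]
    apply Finset.sum_eq_single
    · intro l _ hl
      have hz : P (f i) l = 0 := by
        by_contra hne
        exact hl (hm' (((hrel _ _ hne).symm.trans (hmf i))))
      rw [hz, zero_mul]
    · intro h; exact absurd (Finset.mem_univ i) h
  intro i j
  have ha := hrow i j
  have hb := hrow i j₀
  rw [hX, hX'] at ha hb
  rw [diagonal_mul, diagonal_mul] at ha hb
  rw [hSj₀, hS'j₀, mul_one, mul_one] at hb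
  rw [← mul_assoc, ← hb] at ha
  show S' i j = S (f i) j
  exact (mul_left_cancel₀ (hs (f i)) ha).symm
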